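/- arXiv:2002.06647 — 4 statements merged into one kernel-verified Lean document; each statement's English description precedes it below -/
import Mathlib

section
/- Let (X, ξ) be a probability space, A a sub-σ-algebra, g : X → X a measurable bijection with quasi-invariant measure (ξ ∘ g⁻¹ equivalent to ξ) and density ρ = d(g⁻¹ξ)/dξ assumed strictly positive. Then for every f ∈ L¹(X, ξ): ‖E[f | gA]‖_{L¹(ξ)} = ‖E[ρ · (f ∘ g) | A]‖_{L¹(ξ)}, where gA = {gA : A ∈ A}. -/
open MeasureTheory

private lemma abs_integral_split {X : Type*} [MeasurableSpace X] {μ : Measure X} {ψ : X → ℝ}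
    (hψ : Integrable ψ μ) {s : Set X} (hs : MeasurableSet s)
    (hpos : ∀ x ∈ s, 0 ≤ ψ x) (hneg : ∀ x ∈ sᶜ, ψ x ≤ 0) :
    ∫ x, |ψ x| ∂μ = ∫ x in s, ψ x ∂μ - ∫ x in sᶜ, ψ x ∂μ := by
  have h1 : ∫ x in s, |ψ x| ∂μ = ∫ x in s, ψ x ∂μ :=
    setIntegral_congr_fun hs fun x hx => abs_of_nonneg (hpos x hx)
  have h2 : ∫ x in sᶜ, |ψ x| ∂μ = ∫ x in sᶜ, -ψ x ∂μ :=
    setIntegral_congr_fun hs.compl fun x hx => abs_of_nonpos (hneg x hx)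
  rw [← integral_add_compl hs hψ.abs, h1, h2, integral_neg]
  ring

private lemma split_le_abs_integral {X : Type*} [MeasurableSpace X] {μ : Measure X} {ψ : X → ℝ}
    (hψ : Integrable ψ μ) {s : Set X} (hs : MeasurableSet s) :
    ∫ x in s, ψ x ∂μ - ∫ x in sᶜ, ψ x ∂μ ≤ ∫ x, |ψ x| ∂μ := by
  have h1 : ∫ x in s, ψ x ∂μ ≤ ∫ x in s, |ψ x| ∂μ :=
    integral_mono hψ.restrict hψ.abs.restrict fun x => le_abs_self _
  have h2 : -∫ x in sᶜ, ψ x ∂μ ≤ ∫ x in sᶜ, |ψ x| ∂μ := by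
    rw [← integral_neg]
    exact integral_mono hψ.restrict.neg hψ.abs.restrict fun x => neg_le_abs _
  have := integral_add_compl hs hψ.abs
  linarith

private lemma map_mem_stmt10 {X : Type*} (m : MeasurableSpace X) [mX : MeasurableSpace X]
    (g : X ≃ᵐ X) {s : Set X} (hs : MeasurableSet[m] s) :
    MeasurableSet[MeasurableSpace.map g m] (⇑g.symm ⁻¹' s) := by
  rw [MeasurableSpace.map_def, ← Set.preimage_comp, MeasurableEquiv.symm_comp_self,
    Set.preimage_id]
  exact hs

private lemma aux_stmt10 {X : Type*} (m mg : MeasurableSpace X)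
    [mX : MeasurableSpace X] (ξ : Measure X) [IsProbabilityMeasure ξ]
    (g : X ≃ᵐ X)
    (ρ : X → ℝ) (hρm : Measurable ρ) (hρpos : ∀ x, 0 < ρ x)
    (hRN : ξ.map g.symm = ξ.withDensity (fun x => ENNReal.ofReal (ρ x)))
    (hm : m ≤ mX) (hmg : mg ≤ mX)
    (hmap : ∀ s : Set X, MeasurableSet[m] s → MeasurableSet[mg] (g.symm ⁻¹' s))
    (hmap' : ∀ t : Set X, MeasurableSet[mg] t → MeasurableSet[m] (g ⁻¹' t))
    (f : X → ℝ) (hf : Integrable f ξ)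
    (hint : Integrable (fun x => ρ x * f (g x)) ξ) :
    ∫ x, |(ξ[f|mg]) x| ∂ξ = ∫ x, |(ξ[fun y => ρ y * f (g y)|m]) x| ∂ξ := by
  set h := ξ[f|mg] with hh
  set ψ := ξ[fun y => ρ y * f (g y)|m] with hψdef
  have keyA : ∀ s : Set X, MeasurableSet s →
      ∫ x in s, ρ x * f (g x) ∂ξ = ∫ x in g.symm ⁻¹' s, f x ∂ξ := by
    intro s hs
    have h1 : ∫ x in s, f (g x) ∂(ξ.map g.symm)
        = ∫ x in g.symm ⁻¹' s, f (g (g.symm x)) ∂ξ :=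
      setIntegral_map_equiv g.symm (fun x => f (g x)) s
    have h2 : ∫ x in g.symm ⁻¹' s, f (g (g.symm x)) ∂ξ
        = ∫ x in g.symm ⁻¹' s, f x ∂ξ :=
      setIntegral_congr_fun (g.symm.measurable hs) fun x _ => by simp
    rw [← h2, ← h1, hRN]
    have hdens : (fun x => ENNReal.ofReal (ρ x))
        = fun x => ((Real.toNNReal (ρ x) : NNReal) : ENNReal) := rfl
    rw [hdens, setIntegral_withDensity_eq_setIntegral_smul hρm.real_toNNReal _ hs]
    exact setIntegral_congr_fun hs fun x _ => by
      simp [NNReal.smul_def, Real.coe_toNNReal _ (hρpos x).le]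
  have key : ∀ s : Set X, MeasurableSet[m] s →
      ∫ x in s, ψ x ∂ξ = ∫ x in g.symm ⁻¹' s, h x ∂ξ := by
    intro s hs
    rw [hψdef, setIntegral_condExp hm hint hs, keyA s (hm s hs), hh,
      setIntegral_condExp hmg hf (hmap s hs)]
  have key' : ∀ t : Set X, MeasurableSet[mg] t →
      ∫ x in t, h x ∂ξ = ∫ x in (g : X → X) ⁻¹' t, ψ x ∂ξ := by
    intro t ht
    have hpre : (g.symm : X → X) ⁻¹' ((g : X → X) ⁻¹' t) = t := by ext x; simp
    rw [key _ (hmap' t ht), hpre]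
  have hhint : Integrable h ξ := integrable_condExp
  have hψint : Integrable ψ ξ := integrable_condExp
  have hle1 : ∫ x, |ψ x| ∂ξ ≤ ∫ x, |h x| ∂ξ := by
    have hψm : Measurable[m] ψ := stronglyMeasurable_condExp.measurable
    have hsm : MeasurableSet[m] {x | 0 ≤ ψ x} :=
      measurableSet_le measurable_const hψm
    have hs : MeasurableSet {x | 0 ≤ ψ x} := hm _ hsm
    rw [abs_integral_split hψint hs (fun x hx => hx)
      (fun x hx => (lt_of_not_ge (Set.mem_compl_iff _ _ |>.mp hx)).le)]
    have hcompl : (g.symm : X → X) ⁻¹' ({x | 0 ≤ ψ x}ᶜ)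
        = ((g.symm : X → X) ⁻¹' {x | 0 ≤ ψ x})ᶜ := rfl
    rw [key _ hsm, key _ hsm.compl, hcompl]
    exact split_le_abs_integral hhint (g.symm.measurable hs)
  have hle2 : ∫ x, |h x| ∂ξ ≤ ∫ x, |ψ x| ∂ξ := by
    have hhm : Measurable[mg] h := stronglyMeasurable_condExp.measurable
    have htm : MeasurableSet[mg] {x | 0 ≤ h x} :=
      measurableSet_le measurable_const hhm
    have ht : MeasurableSet {x | 0 ≤ h x} := hmg _ htm
    rw [abs_integral_split hhint ht (fun x hx => hx)
      (fun x hx => (lt_of_not_ge (Set.mem_compl_iff _ _ |>.mp hx)).le)]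
    have hcompl : (g : X → X) ⁻¹' ({x | 0 ≤ h x}ᶜ)
        = ((g : X → X) ⁻¹' {x | 0 ≤ h x})ᶜ := rfl
    rw [key' _ htm, key' _ htm.compl, hcompl]
    exact split_le_abs_integral hψint (g.measurable ht)
  linarith

theorem stmt10 {X : Type*} [mX : MeasurableSpace X] (ξ : Measure X) [IsProbabilityMeasure ξ]
    (g : X ≃ᵐ X)
    (ρ : X → ℝ) (hρm : Measurable ρ) (hρpos : ∀ x, 0 < ρ x)
    (hRN : ξ.map g.symm = ξ.withDensity (fun x => ENNReal.ofReal (ρ x)))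
    (m : MeasurableSpace X) (hm : m ≤ mX)
    (hmg : MeasurableSpace.map g m ≤ mX)
    (f : X → ℝ) (hf : Integrable f ξ)
    (hint : Integrable (fun x => ρ x * f (g x)) ξ) :
    ∫ x, |(ξ[f|MeasurableSpace.map g m]) x| ∂ξ
      = ∫ x, |(ξ[fun y => ρ y * f (g y)|m]) x| ∂ξ := by
  refine aux_stmt10 (mX := mX) m (MeasurableSpace.map g m) ξ g ρ hρm hρpos hRN hm hmg ?_ ?_ f hf hint
  · intro s hs
    exact map_mem_stmt10 (mX := mX) m g hs
  · intro t ht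
    exact (MeasurableSpace.map_def).mp ht
end

section
/- Let (X, ξ) be a probability space, A a sub-σ-algebra, g a measurable automorphism of X preserving the measure class of ξ with ρ = d(g⁻¹ξ)/dξ > 0 a.e. Then for every f ∈ L¹(X, ξ), E[f | gA] = (E[ρ · (f∘g) | A] / E[ρ | A]) ∘ g⁻¹ almost everywhere. -/
open MeasureTheory
open scoped NNReal ENNReal

theorem stmt11 {X : Type*} [mX : MeasurableSpace X] (ξ : Measure X) [IsProbabilityMeasure ξ]
    (g : X ≃ᵐ X)
    (ρ : X → ℝ) (hρm : Measurable ρ) (hρpos : ∀ᵐ x ∂ξ, 0 < ρ x)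
    (hRN : ξ.map g.symm = ξ.withDensity (fun x => ENNReal.ofReal (ρ x)))
    (m : MeasurableSpace X) (hm : m ≤ mX)
    (hmg : MeasurableSpace.map g m ≤ mX)
    (f : X → ℝ) (hf : Integrable f ξ) (hρi : Integrable ρ ξ)
    (hint : Integrable (fun x => ρ x * f (g x)) ξ) :
    ∀ᵐ x ∂ξ,
      (ξ[f|MeasurableSpace.map g m]) x
        = (ξ[fun y => ρ y * f ((@MeasurableEquiv.toEquiv X X mX mX g) y)|m]) ((@MeasurableEquiv.toEquiv X X mX mX g).symm x) / (ξ[ρ|m]) ((@MeasurableEquiv.toEquiv X X mX mX g).symm x) := by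
  classical
  letI mX' : MeasurableSpace X := mX
  have hco : (fun y => ρ y * f ((@MeasurableEquiv.toEquiv X X mX mX g) y)) = fun y => ρ y * f (g y) := rfl
  have hco2 : ∀ x, (@MeasurableEquiv.toEquiv X X mX mX g).symm x = g.symm x := fun _ => rfl
  simp only [hco, hco2]
  set E1 : X → ℝ := ξ[fun y => ρ y * f (g y)|m] with hE1def
  set E2 : X → ℝ := ξ[ρ|m] with hE2def
  have hE1m : StronglyMeasurable[m] E1 := stronglyMeasurable_condExp
  have hE2m : StronglyMeasurable[m] E2 := stronglyMeasurable_condExp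
  set ψ : X → ℝ := fun y => E1 y / E2 y with hψdef
  have hψm : StronglyMeasurable[m] ψ :=
    (hE1m.measurable.div hE2m.measurable).stronglyMeasurable
  have hψmx : Measurable ψ := (hψm.mono hm).measurable
  -- the trimmed measures are sigma-finite
  haveI : SigmaFinite (ξ.trim hm) := by infer_instance
  haveI : SigmaFinite (ξ.trim hmg) := by infer_instance
  -- basic identity for the measure
  have hξeq : (ξ.withDensity (fun x => ENNReal.ofReal (ρ x))).map g = ξ := by
    rw [← hRN, MeasurableEquiv.map_map_symm]
  have hDcoe : (fun x => ENNReal.ofReal (ρ x)) = fun x => (((fun x => (ρ x).toNNReal) x : ℝ≥0) : ℝ≥0∞) := rfl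
  -- change of variables for set integrals
  have keyInt : ∀ (s : Set X), MeasurableSet s → ∀ (φ : X → ℝ), AEStronglyMeasurable φ ξ →
      ∫ x in s, φ x ∂ξ = ∫ y in g ⁻¹' s, ρ y * φ (g y) ∂ξ := by
    intro s hs φ hφ
    conv_lhs => rw [← hξeq]
    rw [setIntegral_map hs (by rw [hξeq]; exact hφ) g.measurable.aemeasurable, hDcoe,
      setIntegral_withDensity_eq_setIntegral_smul (hρm.real_toNNReal) _ (g.measurable hs)]
    refine setIntegral_congr_ae (g.measurable hs) ?_
    filter_upwards [hρpos] with y hy _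
    simp [NNReal.smul_def, Real.coe_toNNReal _ hy.le]
  -- E2 is a.e. positive
  have hE2pos : ∀ᵐ y ∂ξ, 0 < E2 y := by
    set s : Set X := {y | E2 y ≤ 0} with hsdef
    have hsm : MeasurableSet[m] s := hE2m.measurable measurableSet_Iic
    have hρ_nn : 0 ≤ᵐ[ξ.restrict s] ρ := ae_restrict_of_ae (hρpos.mono fun y hy => hy.le)
    have h1 : ∫ y in s, ρ y ∂ξ = ∫ y in s, E2 y ∂ξ := (setIntegral_condExp hm hρi hsm).symm
    have h2 : ∫ y in s, E2 y ∂ξ ≤ 0 := by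
      refine setIntegral_nonpos (hm s hsm) fun y hy => hy
    have h3 : (0:ℝ) ≤ ∫ y in s, ρ y ∂ξ := integral_nonneg_of_ae hρ_nn
    have h4 : ∫ y in s, ρ y ∂ξ = 0 := le_antisymm (h1 ▸ h2) h3
    have h5 : ρ =ᵐ[ξ.restrict s] 0 :=
      (integral_eq_zero_iff_of_nonneg_ae hρ_nn hρi.integrableOn).mp h4
    have h6 : ξ s = 0 := by
      have hFalse : ∀ᵐ y ∂ξ.restrict s, False := by
        filter_upwards [h5, ae_restrict_of_ae hρpos] with y h h'
        rw [Pi.zero_apply] at h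
        exact absurd h h'.ne'
      have := ae_iff.mp hFalse
      simpa [Measure.restrict_apply MeasurableSet.univ] using this
    rw [ae_iff]
    convert h6 using 2
    ext y
    simp [hsdef, not_lt]
  -- Integrability of ρ * ψ via truncation
  have habs : StronglyMeasurable[m] fun y => |ψ y| := by simpa only [Real.norm_eq_abs] using hψm.norm
  set F : ℕ → X → ℝ := fun n => ({y | |ψ y| ≤ (n:ℝ)}).indicator (fun y => |ψ y|) with hFdef
  have hFm : ∀ n, StronglyMeasurable[m] (F n) := fun n =>
    habs.indicator (habs.measurable measurableSet_Iic)
  have hF_nonneg : ∀ n y, 0 ≤ F n y := fun n y =>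
    Set.indicator_nonneg (fun y _ => abs_nonneg _) y
  have hF_le : ∀ n y, F n y ≤ |ψ y| := fun n y =>
    Set.indicator_le_self' (fun y _ => abs_nonneg _) y
  have hF_bdd : ∀ n y, ‖F n y‖ ≤ (n:ℝ) := by
    intro n y
    rw [Real.norm_eq_abs, abs_of_nonneg (hF_nonneg n y)]
    by_cases hy : y ∈ {y | |ψ y| ≤ (n:ℝ)}
    · rw [hFdef]; simp only [Set.indicator_of_mem hy]; exact hy
    · rw [hFdef]; simp only [Set.indicator_of_notMem hy]; positivity
  have hFρ_int : ∀ n, Integrable (F n * ρ) ξ := fun n =>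
    hρi.bdd_mul ((hFm n).mono hm).aestronglyMeasurable (Filter.Eventually.of_forall (hF_bdd n))
  have hE1abs_int : Integrable (fun y => |E1 y|) ξ := integrable_condExp.abs
  have hbound : ∀ n, ∫ y, F n y * ρ y ∂ξ ≤ ∫ y, |E1 y| ∂ξ := by
    intro n
    have hpull : ξ[F n * ρ|m] =ᵐ[ξ] F n * E2 :=
      condExp_mul_of_stronglyMeasurable_left (hFm n) (hFρ_int n) hρi
    have hFE2_int : Integrable (F n * E2) ξ := integrable_condExp.congr hpull
    have hcalc : ∫ y, F n y * ρ y ∂ξ = ∫ y, (F n * E2) y ∂ξ :=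
      calc ∫ y, F n y * ρ y ∂ξ = ∫ y, (F n * ρ) y ∂ξ := rfl
        _ = ∫ y, (ξ[F n * ρ|m]) y ∂ξ := (integral_condExp hm).symm
        _ = ∫ y, (F n * E2) y ∂ξ := integral_congr_ae hpull
    rw [hcalc]
    refine integral_mono_ae hFE2_int hE1abs_int ?_
    filter_upwards [hE2pos] with y hy
    simp only [Pi.mul_apply]
    by_cases hmem : y ∈ {y | |ψ y| ≤ (n:ℝ)}
    · rw [hFdef]
      simp only [Set.indicator_of_mem hmem]
      rw [hψdef]
      rw [abs_div, abs_of_pos hy, div_mul_cancel₀ _ hy.ne']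
    · rw [hFdef]; simp only [Set.indicator_of_notMem hmem, zero_mul]
      exact abs_nonneg _
  have hρabsψ_int : Integrable (fun y => ρ y * |ψ y|) ξ := by
    refine ⟨(hρm.mul hψmx.abs).aestronglyMeasurable, ?_⟩
    rw [hasFiniteIntegral_def]
    have hGmeas : ∀ n : ℕ, Measurable fun y => ENNReal.ofReal (F n y * ρ y) := fun n =>
      (((hFm n).mono hm).measurable.mul hρm).ennreal_ofReal
    have hGmono : Monotone fun (n : ℕ) (y : X) => ENNReal.ofReal (F n y * ρ y) := by
      intro a b hab
      intro y
      rcases le_or_gt 0 (ρ y) with hρy | hρy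
      · refine ENNReal.ofReal_le_ofReal (mul_le_mul_of_nonneg_right ?_ hρy)
        rw [hFdef]
        by_cases hmem : y ∈ {y | |ψ y| ≤ (a:ℝ)}
        · have hmem' : y ∈ {y | |ψ y| ≤ (b:ℝ)} :=
            show |ψ y| ≤ (b:ℝ) from le_trans hmem (Nat.cast_le.mpr hab)
          simp only [Set.indicator_of_mem hmem, Set.indicator_of_mem hmem']
          exact le_rfl
        · simp only [Set.indicator_of_notMem hmem]
          exact Set.indicator_nonneg (fun y _ => abs_nonneg _) y
      · have h1 : ENNReal.ofReal (F a y * ρ y) = 0 :=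
          ENNReal.ofReal_eq_zero.mpr (mul_nonpos_of_nonneg_of_nonpos (hF_nonneg a y) hρy.le)
        simp [h1]
    have hsup : ∀ᵐ y ∂ξ, (⨆ n : ℕ, ENNReal.ofReal (F n y * ρ y)) = ENNReal.ofReal (|ψ y| * ρ y) := by
      filter_upwards [hρpos] with y hy
      refine le_antisymm (iSup_le fun n => ENNReal.ofReal_le_ofReal
        (mul_le_mul_of_nonneg_right (hF_le n y) hy.le)) ?_
      have hmem : y ∈ {z | |ψ z| ≤ ((⌈|ψ y|⌉₊ : ℕ):ℝ)} := show |ψ y| ≤ _ from Nat.le_ceil _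
      refine le_trans (le_of_eq ?_) (le_iSup _ (⌈|ψ y|⌉₊))
      rw [hFdef]
      simp only [Set.indicator_of_mem hmem]
    have hlint : ∫⁻ y, ENNReal.ofReal (|ψ y| * ρ y) ∂ξ ≤ ENNReal.ofReal (∫ y, |E1 y| ∂ξ) := by
      rw [← lintegral_congr_ae hsup, lintegral_iSup hGmeas hGmono]
      refine iSup_le fun n => ?_
      have hFρnn : 0 ≤ᵐ[ξ] fun y => F n y * ρ y := by
        filter_upwards [hρpos] with y hy
        exact mul_nonneg (hF_nonneg n y) hy.le
      rw [← ofReal_integral_eq_lintegral_ofReal (show Integrable (fun y => F n y * ρ y) ξ from hFρ_int n) hFρnn]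
      exact ENNReal.ofReal_le_ofReal (hbound n)
    refine lt_of_le_of_lt ?_ (lt_of_le_of_lt hlint ENNReal.ofReal_lt_top)
    refine lintegral_mono_ae ?_
    filter_upwards [hρpos] with y hy
    rw [Real.enorm_eq_ofReal_abs]
    refine ENNReal.ofReal_le_ofReal ?_
    rw [abs_mul, abs_of_pos hy, abs_abs, mul_comm]
  have hρψ_int : Integrable (fun y => ρ y * ψ y) ξ := by
    refine hρabsψ_int.mono' (hρm.mul hψmx).aestronglyMeasurable ?_
    filter_upwards [hρpos] with y hy
    rw [Real.norm_eq_abs, abs_mul, abs_of_pos hy]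
  have hψρ_int : Integrable (ψ * ρ) ξ := by
    refine hρψ_int.congr ?_
    filter_upwards with y
    simp [mul_comm]
  -- pull-out property
  have hpull : ξ[ψ * ρ|m] =ᵐ[ξ] ψ * E2 :=
    condExp_mul_of_stronglyMeasurable_left hψm hψρ_int hρi
  have hψE2 : ψ * E2 =ᵐ[ξ] E1 := by
    filter_upwards [hE2pos] with y hy
    simp only [Pi.mul_apply, hψdef]
    rw [div_mul_cancel₀ _ hy.ne']
  -- the candidate function
  set h : X → ℝ := fun x => ψ (g.symm x) with hhdef
  have hgsymm_meas : @Measurable X X (MeasurableSpace.map (⇑g) m) m g.symm := by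
    intro t ht
    show MeasurableSet[m] (⇑g ⁻¹' (⇑g.symm ⁻¹' t))
    have : ⇑g ⁻¹' (⇑g.symm ⁻¹' t) = t := by
      ext y; simp
    rwa [this]
  have hhm : StronglyMeasurable[MeasurableSpace.map (⇑g) m] h :=
    (hψm.measurable.comp hgsymm_meas).stronglyMeasurable
  have hh_aesm : AEStronglyMeasurable h ξ := (hhm.mono hmg).aestronglyMeasurable
  -- integrability of h
  have hh_int : Integrable h ξ := by
    rw [← hξeq, (MeasurableEquiv.measurableEmbedding g).integrable_map_iff]
    have hcomp : (h ∘ ⇑g) = ψ := by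
      ext y; simp [hhdef]
    rw [hcomp, hDcoe, integrable_withDensity_iff_integrable_smul hρm.real_toNNReal]
    refine hρψ_int.congr ?_
    filter_upwards [hρpos] with y hy
    simp [NNReal.smul_def, Real.coe_toNNReal _ hy.le]
  -- h equals the conditional expectation
  have hmain : h =ᵐ[ξ] ξ[f|MeasurableSpace.map (⇑g) m] := by
    refine ae_eq_condExp_of_forall_setIntegral_eq hmg hf
      (fun s _ _ => hh_int.integrableOn) (fun s hs _ => ?_) ⟨h, hhm, Filter.EventuallyEq.rfl⟩
    have hsmx : MeasurableSet s := hmg s hs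
    have ht : MeasurableSet[m] (⇑g ⁻¹' s) := hs
    calc ∫ x in s, h x ∂ξ = ∫ y in ⇑g ⁻¹' s, ρ y * h (g y) ∂ξ := keyInt s hsmx h hh_aesm
      _ = ∫ y in ⇑g ⁻¹' s, (ψ * ρ) y ∂ξ := by
          refine setIntegral_congr_ae (hm _ ht) ?_
          filter_upwards with y _
          simp [hhdef, mul_comm]
      _ = ∫ y in ⇑g ⁻¹' s, E1 y ∂ξ := by
          rw [← setIntegral_condExp hm hψρ_int ht]
          refine setIntegral_congr_ae (hm _ ht) ?_
          filter_upwards [hpull.trans hψE2] with y hy _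
          exact hy
      _ = ∫ y in ⇑g ⁻¹' s, ρ y * f (g y) ∂ξ := setIntegral_condExp hm hint ht
      _ = ∫ x in s, f x ∂ξ := (keyInt s hsmx f hf.1).symm
  filter_upwards [hmain] with x hx
  rw [← hx]
end

section
/- Let (X, ξ) be a probability space and (f_n) a sequence of nonnegative integrable functions, f a nonnegative integrable function, all with the same integral ∫ f_n dξ = ∫ f dξ. Then α_f(t) ≤ liminf_n α_{f_n}(t) for all t ≥ 0 if and only if ∫_X |f − t| dξ ≤ liminf_n ∫_X |f_n − t| dξ for all t ≥ 0. -/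
open MeasureTheory Filter

noncomputable def alphaFn {X : Type*} [MeasurableSpace X] (ξ : Measure X) (f : X → ℝ) (t : ℝ) : ℝ :=
  ∫ τ in Set.Ioi t, (ξ {x | τ ≤ f x}).toReal

lemma alpha_eq {X : Type*} [MeasurableSpace X] (ξ : Measure X) [IsProbabilityMeasure ξ]
    (f : X → ℝ) (hfi : Integrable f ξ) (t : ℝ) :
    alphaFn ξ f t = ∫ x, max (f x - t) 0 ∂ξ := by
  have hgi : Integrable (fun x => max (f x - t) 0) ξ :=
    (hfi.sub (integrable_const t)).sup (integrable_const 0)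
  have hgnn : 0 ≤ᵐ[ξ] (fun x => max (f x - t) 0) :=
    Filter.Eventually.of_forall fun x => le_max_right _ _
  rw [hgi.integral_eq_integral_meas_le hgnn]
  have key : ∀ s ∈ Set.Ioi (0:ℝ), (ξ {x | s ≤ max (f x - t) 0}).toReal
      = (ξ {x | s + t ≤ f x}).toReal := by
    intro s hs
    have hs' : (0:ℝ) < s := hs
    have hset : {x | s ≤ max (f x - t) 0} = {x | s + t ≤ f x} := by
      ext x
      simp only [Set.mem_setOf_eq, le_max_iff]
      constructor
      · rintro (h | h) <;> linarith
      · intro h; left; linarith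
    rw [hset]
  simp only [measureReal_def]
  rw [setIntegral_congr_fun measurableSet_Ioi key]
  have hmp : MeasurePreserving (fun s : ℝ => s + t) volume volume :=
    measurePreserving_add_right volume t
  have hemb : MeasurableEmbedding (fun s : ℝ => s + t) :=
    (Homeomorph.addRight t).measurableEmbedding
  have := hmp.setIntegral_preimage_emb hemb
    (fun τ => (ξ {x | τ ≤ f x}).toReal) (Set.Ioi t)
  have hpre : (fun s : ℝ => s + t) ⁻¹' Set.Ioi t = Set.Ioi 0 := by
    ext s; simp [Set.mem_Ioi]
  rw [hpre] at this
  rw [this]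
  rfl

lemma abs_eq_aux {X : Type*} [MeasurableSpace X] (ξ : Measure X) [IsProbabilityMeasure ξ]
    (f : X → ℝ) (hfi : Integrable f ξ) (t : ℝ) :
    ∫ x, |f x - t| ∂ξ = 2 * alphaFn ξ f t - ∫ x, f x ∂ξ + t := by
  rw [alpha_eq ξ f hfi t]
  have hgi : Integrable (fun x => max (f x - t) 0) ξ :=
    (hfi.sub (integrable_const t)).sup (integrable_const 0)
  have hptw : ∀ x, |f x - t| = 2 * max (f x - t) 0 - (f x - t) := by
    intro x
    rcases le_total (f x - t) 0 with h | h
    · rw [abs_of_nonpos h, max_eq_right h]; ring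
    · rw [abs_of_nonneg h, max_eq_left h]; ring
  have hsub : Integrable (fun x => f x - t) ξ := hfi.sub (integrable_const t)
  calc ∫ x, |f x - t| ∂ξ = ∫ x, (2 * max (f x - t) 0 - (f x - t)) ∂ξ := by
        exact integral_congr_ae (Filter.Eventually.of_forall fun x => hptw x)
    _ = 2 * ∫ x, max (f x - t) 0 ∂ξ - ∫ x, f x ∂ξ + t := by
        rw [integral_sub (hgi.const_mul 2) hsub,
          integral_const_mul, integral_sub hfi (integrable_const t), integral_const]
        simp [measure_univ]
        ring

theorem stmt12 {X : Type*} [MeasurableSpace X] (ξ : Measure X) [IsProbabilityMeasure ξ]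
    (fs : ℕ → X → ℝ) (hfsm : ∀ n, Measurable (fs n)) (hfs0 : ∀ n x, 0 ≤ fs n x)
    (hfsi : ∀ n, Integrable (fs n) ξ)
    (f : X → ℝ) (hfm : Measurable f) (hf0 : ∀ x, 0 ≤ f x) (hfi : Integrable f ξ)
    (hsame : ∀ n, ∫ x, fs n x ∂ξ = ∫ x, f x ∂ξ) :
    (∀ t : ℝ, 0 ≤ t → alphaFn ξ f t ≤ liminf (fun n => alphaFn ξ (fs n) t) atTop)
      ↔ (∀ t : ℝ, 0 ≤ t →
          ∫ x, |f x - t| ∂ξ ≤ liminf (fun n => ∫ x, |fs n x - t| ∂ξ) atTop) := by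
  have key : ∀ t : ℝ, 0 ≤ t →
      (alphaFn ξ f t ≤ liminf (fun n => alphaFn ξ (fs n) t) atTop ↔
       ∫ x, |f x - t| ∂ξ ≤ liminf (fun n => ∫ x, |fs n x - t| ∂ξ) atTop) := by
    intro t ht
    set a : ℕ → ℝ := fun n => alphaFn ξ (fs n) t with ha
    set C : ℝ := ∫ x, f x ∂ξ with hC
    -- bounds on a
    have ha_nn : ∀ n, 0 ≤ a n := by
      intro n
      show 0 ≤ alphaFn ξ (fs n) t
      rw [alpha_eq ξ (fs n) (hfsi n) t]
      exact integral_nonneg fun x => le_max_right _ _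
    have ha_ub : ∀ n, a n ≤ C := by
      intro n
      show alphaFn ξ (fs n) t ≤ C
      rw [alpha_eq ξ (fs n) (hfsi n) t, ← hsame n]
      apply integral_mono (((hfsi n).sub (integrable_const t)).sup (integrable_const 0)) (hfsi n)
      intro x
      have := hfs0 n x
      simp only [Pi.sup_apply, Pi.sub_apply, Pi.zero_apply]
      rcases le_total (fs n x - t) 0 with h | h
      · rw [sup_eq_right.mpr h]; exact this
      · rw [sup_eq_left.mpr h]; linarith
    have hbdd_below : atTop.IsBoundedUnder (· ≥ ·) a :=
      isBoundedUnder_of ⟨0, fun n => ha_nn n⟩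
    have hbdd_above : atTop.IsBoundedUnder (· ≤ ·) a :=
      isBoundedUnder_of ⟨C, fun n => ha_ub n⟩
    have hcobdd : atTop.IsCoboundedUnder (· ≥ ·) a := hbdd_above.isCoboundedUnder_ge
    have hmono : Monotone (fun x : ℝ => 2 * x + (t - C)) := by
      intro x y h
      dsimp
      linarith
    have hcont : ContinuousAt (fun x : ℝ => 2 * x + (t - C)) (liminf a atTop) := by
      fun_prop
    have hlim : liminf (fun n => 2 * a n + (t - C)) atTop = 2 * liminf a atTop + (t - C) := by
      have := hmono.map_liminf_of_continuousAt a hcont hcobdd hbdd_below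
      simpa [Function.comp_def] using this.symm
    have hfun : (fun n => ∫ x, |fs n x - t| ∂ξ) = fun n => 2 * a n + (t - C) := by
      funext n
      rw [abs_eq_aux ξ (fs n) (hfsi n) t, hsame n]
      ring
    have hf_eq : ∫ x, |f x - t| ∂ξ = 2 * alphaFn ξ f t + (t - C) := by
      rw [abs_eq_aux ξ f hfi t]
      ring
    rw [hfun, hf_eq, hlim]
    constructor
    · intro h; linarith
    · intro h; linarith
  constructor
  · intro h t ht; exact (key t ht).mp (h t ht)
  · intro h t ht; exact (key t ht).mpr (h t ht)
end

section
/- Let (X, ξ) be a probability space and (A_n) a sequence of sub-σ-algebras. Suppose A is a sub-σ-algebra which is an upper Kudō-limit of (A_n), i.e. limsup_n ‖E[φ|A_n]‖₁ ≤ ‖E[φ|A]‖₁ for all φ ∈ L¹(X,ξ). Then for every φ ∈ L¹(X,ξ), lim_n ‖E[φ|A_n] − E[E[φ|A] | A_n]‖₁ = 0. -/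
open MeasureTheory Filter

theorem stmt13 {X : Type*} [mX : MeasurableSpace X] (ξ : Measure X) [IsProbabilityMeasure ξ]
    (A : ℕ → MeasurableSpace X) (hA : ∀ n, A n ≤ mX)
    (𝒜 : MeasurableSpace X) (h𝒜 : 𝒜 ≤ mX)
    (hupper : ∀ ψ : X → ℝ, Integrable ψ ξ →
      limsup (fun n => ∫ x, |(ξ[ψ|A n]) x| ∂ξ) atTop ≤ ∫ x, |(ξ[ψ|𝒜]) x| ∂ξ) :
    ∀ φ : X → ℝ, Integrable φ ξ →
      Tendsto (fun n => ∫ x, |(ξ[φ|A n]) x - (ξ[ξ[φ|𝒜]|A n]) x| ∂ξ) atTop (nhds 0) := by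
  intro φ hφ
  set ψ : X → ℝ := φ - ξ[φ|𝒜] with hψdef
  have hg : Integrable (ξ[φ|𝒜]) ξ := integrable_condExp
  have hψ : Integrable ψ ξ := hφ.sub hg
  -- E[ψ|𝒜] = 0 a.e.
  have h0 : (ξ[ψ|𝒜]) =ᵐ[ξ] 0 := by
    calc (ξ[ψ|𝒜]) =ᵐ[ξ] ξ[φ|𝒜] - ξ[ξ[φ|𝒜]|𝒜] := condExp_sub hφ hg 𝒜
    _ =ᵐ[ξ] ξ[φ|𝒜] - ξ[φ|𝒜] := by
        filter_upwards [condExp_condExp_of_le (le_refl 𝒜) h𝒜 (μ := ξ) (f := φ)] with x hx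
        simp [hx]
    _ = 0 := by simp
  have hzero : ∫ x, |(ξ[ψ|𝒜]) x| ∂ξ = 0 := by
    rw [integral_congr_ae (g := fun _ => (0:ℝ))]
    · simp
    · filter_upwards [h0] with x hx; simp [hx]
  -- rewrite the target integrand
  have heq : ∀ n, ∫ x, |(ξ[φ|A n]) x - (ξ[ξ[φ|𝒜]|A n]) x| ∂ξ = ∫ x, |(ξ[ψ|A n]) x| ∂ξ := by
    intro n
    refine integral_congr_ae ?_
    filter_upwards [condExp_sub (m := A n) (μ := ξ) hφ hg] with x hx
    rw [hψdef]
    simp only [hx, Pi.sub_apply]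
  have hnn : ∀ n, 0 ≤ ∫ x, |(ξ[ψ|A n]) x| ∂ξ := fun n =>
    integral_nonneg fun x => abs_nonneg _
  have hub : ∀ n, ∫ x, |(ξ[ψ|A n]) x| ∂ξ ≤ ∫ x, |ψ x| ∂ξ := fun n =>
    integral_abs_condExp_le _
  have hlimsup : limsup (fun n => ∫ x, |(ξ[ψ|A n]) x| ∂ξ) atTop ≤ 0 := by
    simpa [hzero] using hupper ψ hψ
  have htend : Tendsto (fun n => ∫ x, |(ξ[ψ|A n]) x| ∂ξ) atTop (nhds 0) := by
    have hbdd : IsBoundedUnder (· ≤ ·) atTop (fun n => ∫ x, |(ξ[ψ|A n]) x| ∂ξ) :=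
      isBoundedUnder_of ⟨∫ x, |ψ x| ∂ξ, hub⟩
    have hbdd' : IsBoundedUnder (· ≥ ·) atTop (fun n => ∫ x, |(ξ[ψ|A n]) x| ∂ξ) :=
      isBoundedUnder_of ⟨0, hnn⟩
    refine tendsto_of_le_liminf_of_limsup_le ?_ hlimsup hbdd hbdd'
    exact le_liminf_of_le hbdd.isCoboundedUnder_ge (Eventually.of_forall hnn)
  simpa only [heq] using htend
end
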